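/- Generalized substitution theorem (Theorem 3): Let A and B be formulas, let S_A be an R-expression containing a designated occurrence of the formula A, and let S_B be the result of replacing that occurrence of A in S_A by B. Then from the four R-expressions constituting A ⇔ˢ B taken as premises, each of the four R-expressions constituting S_A ⇔ˢ S_B is derivable in SC∞; i.e., A ⇔ˢ B ⊢ S_A ⇔ˢ S_B. -/
import Mathlib


/-- Formulas of the connexive logic C: propositional variables, strong
negation `∼`, conjunction, disjunction and implication. -/
inductive Formula : Type
  | var : Nat → Formula
  | snot : Formula → Formula
  | and : Formula → Formula → Formula
  | or : Formula → Formula → Formula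
  | imp : Formula → Formula → Formula
deriving DecidableEq

/-- R-expressions over the language of C.  `fm A` is the formula `A`,
`negFm A` is `−A`, `seq Δ S` is `(Δ ⇒ S)` and `negSeq Δ S` is `−(Δ ⇒ S)`.
The convention `−−S = S` is implemented by the involution `rneg`. -/
inductive RExpr : Type
  | fm : Formula → RExpr
  | negFm : Formula → RExpr
  | seq : List RExpr → RExpr → RExpr
  | negSeq : List RExpr → RExpr → RExpr

/-- The refutation `−S` of an R-expression, with `−−S = S`. -/
def rneg : RExpr → RExpr
  | .fm A => .negFm A
  | .negFm A => .fm A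
  | .seq Δ S => .negSeq Δ S
  | .negSeq Δ S => .seq Δ S

/-- Derivability in the higher-order sequent calculus `SC∞` from a set `P`
of R-expressions taken as additional premises. -/
inductive SC (P : Set RExpr) : RExpr → Prop
  | prem {S} : S ∈ P → SC P S
  | rf (S) : SC P (.seq [S] S)
  | wl {Δ S} (T) : SC P (.seq Δ S) → SC P (.seq (Δ ++ [T]) S)
  | pl {U} (Δ S T Γ) : SC P (.seq (Δ ++ S :: T :: Γ) U) → SC P (.seq (Δ ++ T :: S :: Γ) U)
  | cl {Δ S T} : SC P (.seq (Δ ++ [S, S]) T) → SC P (.seq (Δ ++ [S]) T)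
  | cut {Δ S T} : SC P (.seq Δ S) → SC P (.seq (Δ ++ [S]) T) → SC P (.seq Δ T)
  | riP {Γ Δ S} : SC P (.seq (Γ ++ Δ) S) → SC P (.seq Γ (.seq Δ S))
  | liP {Γ Δ S T} : (∀ U ∈ Δ, SC P (.seq Γ U)) → SC P (.seq (Γ ++ [S]) T) →
      SC P (.seq (Γ ++ [.seq Δ S]) T)
  | riN {Δ Γ S} : SC P (.seq (Δ ++ Γ) (rneg S)) → SC P (.seq Δ (rneg (.seq Γ S)))
  | riN' {Δ Γ S} : SC P (.seq Δ (rneg (.seq Γ S))) → SC P (.seq (Δ ++ Γ) (rneg S))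
  | liN {Δ Γ S T} : (∀ U ∈ Γ, SC P (.seq Δ U)) → SC P (.seq (Δ ++ [rneg S]) T) →
      SC P (.seq (Δ ++ [rneg (.seq Γ S)]) T)
  | snotL {Δ A S} : SC P (.seq (Δ ++ [.negFm A]) S) → SC P (.seq (Δ ++ [.fm (.snot A)]) S)
  | snotR {Δ A} : SC P (.seq Δ (.negFm A)) → SC P (.seq Δ (.fm (.snot A)))
  | snotLm {Δ A S} : SC P (.seq (Δ ++ [.fm A]) S) → SC P (.seq (Δ ++ [.negFm (.snot A)]) S)
  | snotRm {Δ A} : SC P (.seq Δ (.fm A)) → SC P (.seq Δ (.negFm (.snot A)))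
  | andL {Δ A B S} : SC P (.seq (Δ ++ [.fm A, .fm B]) S) → SC P (.seq (Δ ++ [.fm (.and A B)]) S)
  | andR {Δ A B} : SC P (.seq Δ (.fm A)) → SC P (.seq Δ (.fm B)) → SC P (.seq Δ (.fm (.and A B)))
  | andLm {Δ A B S} : SC P (.seq (Δ ++ [.negFm A]) S) → SC P (.seq (Δ ++ [.negFm B]) S) →
      SC P (.seq (Δ ++ [.negFm (.and A B)]) S)
  | andRm₁ {Δ A B} : SC P (.seq Δ (.negFm A)) → SC P (.seq Δ (.negFm (.and A B)))
  | andRm₂ {Δ A B} : SC P (.seq Δ (.negFm B)) → SC P (.seq Δ (.negFm (.and A B)))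
  | orL {Δ A B S} : SC P (.seq (Δ ++ [.fm A]) S) → SC P (.seq (Δ ++ [.fm B]) S) →
      SC P (.seq (Δ ++ [.fm (.or A B)]) S)
  | orR₁ {Δ A B} : SC P (.seq Δ (.fm A)) → SC P (.seq Δ (.fm (.or A B)))
  | orR₂ {Δ A B} : SC P (.seq Δ (.fm B)) → SC P (.seq Δ (.fm (.or A B)))
  | orLm {Δ A B S} : SC P (.seq (Δ ++ [.negFm A, .negFm B]) S) →
      SC P (.seq (Δ ++ [.negFm (.or A B)]) S)
  | orRm {Δ A B} : SC P (.seq Δ (.negFm A)) → SC P (.seq Δ (.negFm B)) →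
      SC P (.seq Δ (.negFm (.or A B)))
  | impL {Δ A B S} : SC P (.seq (Δ ++ [.seq [.fm A] (.fm B)]) S) →
      SC P (.seq (Δ ++ [.fm (.imp A B)]) S)
  | impR {Δ A B} : SC P (.seq Δ (.seq [.fm A] (.fm B))) → SC P (.seq Δ (.fm (.imp A B)))
  | impLm {Δ A B S} : SC P (.seq (Δ ++ [.negSeq [.fm A] (.fm B)]) S) →
      SC P (.seq (Δ ++ [.negFm (.imp A B)]) S)
  | impRm {Δ A B} : SC P (.seq Δ (.negSeq [.fm A] (.fm B))) → SC P (.seq Δ (.negFm (.imp A B)))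

/-- `S ⇔ˢ T` relative to the premise set `P`: the four R-expressions
`S ⇒ T`, `T ⇒ S`, `−S ⇒ −T`, `−T ⇒ −S` are each derivable from `P`. -/
def StrictEquiv (P : Set RExpr) (S T : RExpr) : Prop :=
  SC P (.seq [S] T) ∧ SC P (.seq [T] S) ∧
  SC P (.seq [rneg S] (rneg T)) ∧ SC P (.seq [rneg T] (rneg S))

/-- The four R-expressions constituting `S ⇔ˢ T`, taken as premises. -/
def equivPrems (S T : RExpr) : Set RExpr :=
  {RExpr.seq [S] T, RExpr.seq [T] S, RExpr.seq [rneg S] (rneg T), RExpr.seq [rneg T] (rneg S)}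
/-- `ReplF A B C D`: the formula `C` contains a designated occurrence of the
formula `A`, and `D` is the result of replacing that occurrence by `B`. -/
inductive ReplF (A B : Formula) : Formula → Formula → Prop
  | here : ReplF A B A B
  | snot {C D} : ReplF A B C D → ReplF A B (.snot C) (.snot D)
  | andLeft {C D} (E) : ReplF A B C D → ReplF A B (.and C E) (.and D E)
  | andRight {C D} (E) : ReplF A B C D → ReplF A B (.and E C) (.and E D)
  | orLeft {C D} (E) : ReplF A B C D → ReplF A B (.or C E) (.or D E)
  | orRight {C D} (E) : ReplF A B C D → ReplF A B (.or E C) (.or E D)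
  | impLeft {C D} (E) : ReplF A B C D → ReplF A B (.imp C E) (.imp D E)
  | impRight {C D} (E) : ReplF A B C D → ReplF A B (.imp E C) (.imp E D)

/-- `ReplFR A B U V`: the R-expression `U` contains a designated occurrence of
the formula `A` (inside one of its formula components), and `V` is the result
of replacing that occurrence by `B`. -/
inductive ReplFR (A B : Formula) : RExpr → RExpr → Prop
  | fm {C D} : ReplF A B C D → ReplFR A B (.fm C) (.fm D)
  | neg {U V} : ReplFR A B U V → ReplFR A B (rneg U) (rneg V)
  | seqSucc {Δ U V} : ReplFR A B U V → ReplFR A B (.seq Δ U) (.seq Δ V)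
  | seqMem {U V W} (Δ Γ) : ReplFR A B U V →
      ReplFR A B (.seq (Δ ++ U :: Γ) W) (.seq (Δ ++ V :: Γ) W)

/-! ### Auxiliary lemmas -/

theorem rnn (S : RExpr) : rneg (rneg S) = S := by cases S <;> rfl

variable {P : Set RExpr}

theorem sc_perm_ctx {l l' : List RExpr} (p : l.Perm l') :
    ∀ Γ S, SC P (.seq (Γ ++ l) S) → SC P (.seq (Γ ++ l') S) := by
  induction p with
  | nil => exact fun _ _ h => h
  | cons x p ih =>
      intro Γ S h
      have := ih (Γ ++ [x]) S (by simpa using h)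
      simpa using this
  | swap x y l =>
      intro Γ S h
      exact SC.pl Γ y x l h
  | trans p q ih1 ih2 =>
      intro Γ S h
      exact ih2 Γ S (ih1 Γ S h)

theorem sc_perm {l l' : List RExpr} {S} (p : l.Perm l') (h : SC P (.seq l S)) :
    SC P (.seq l' S) := sc_perm_ctx p [] S h

theorem sc_weak {Δ : List RExpr} {S} (Γ : List RExpr) (h : SC P (.seq Δ S)) :
    SC P (.seq (Δ ++ Γ) S) := by
  induction Γ generalizing Δ with
  | nil => simpa
  | cons a Γ ih =>
      have := ih (Δ := Δ ++ [a]) (SC.wl a h)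
      simpa using this

theorem sc_contr_head {a : RExpr} {l S} (h : SC P (.seq (a :: a :: l) S)) :
    SC P (.seq (a :: l) S) := by
  have h1 : SC P (.seq (l ++ [a, a]) S) :=
    sc_perm (by simpa using List.perm_append_comm (l₁ := [a, a]) (l₂ := l)) h
  have h2 : SC P (.seq (l ++ [a]) S) := SC.cl h1
  exact sc_perm (by simp) h2

theorem sc_absorb {Δ' : List RExpr} {S} :
    ∀ Δ : List RExpr, (∀ x ∈ Δ, x ∈ Δ') → SC P (.seq (Δ' ++ Δ) S) → SC P (.seq Δ' S)
  | [], _, h => by simp at h; exact h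
  | a :: Δ, hs, h => by
      obtain ⟨l1, l2, he⟩ := List.append_of_mem (hs a (by simp))
      subst he
      have p1 : ((l1 ++ a :: l2) ++ a :: Δ).Perm (a :: a :: ((l1 ++ l2) ++ Δ)) := by
        have e : (l1 ++ a :: l2) ++ a :: Δ = l1 ++ a :: (l2 ++ a :: Δ) := by simp
        rw [e]
        refine List.perm_middle.trans (List.Perm.cons a ?_)
        rw [← List.append_assoc]
        exact List.perm_middle
      have h2 := sc_contr_head (sc_perm p1 h)
      have p2 : (a :: ((l1 ++ l2) ++ Δ)).Perm ((l1 ++ a :: l2) ++ Δ) := by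
        have e : (l1 ++ a :: l2) ++ Δ = l1 ++ a :: (l2 ++ Δ) := by simp
        rw [e, List.append_assoc]
        exact List.perm_middle.symm
      exact sc_absorb Δ (fun x hx => hs x (by simp [hx])) (sc_perm p2 h2)

theorem sc_mono {Δ Δ' : List RExpr} {S} (h : SC P (.seq Δ S)) (hs : ∀ x ∈ Δ, x ∈ Δ') :
    SC P (.seq Δ' S) := by
  have h1 : SC P (.seq (Δ' ++ Δ) S) := sc_perm List.perm_append_comm (sc_weak Δ' h)
  exact sc_absorb Δ hs h1

theorem sc_ax {Δ : List RExpr} {S} (h : S ∈ Δ) : SC P (.seq Δ S) :=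
  sc_mono (SC.rf S) (by simpa using h)

theorem StrictEquiv.symm {S T : RExpr} (h : StrictEquiv P S T) : StrictEquiv P T S :=
  ⟨h.2.1, h.1, h.2.2.2, h.2.2.1⟩

/-! ### Congruence lemmas for connectives -/

theorem snot_congr {C D} (he : StrictEquiv P (.fm C) (.fm D)) :
    StrictEquiv P (.fm (.snot C)) (.fm (.snot D)) := by
  obtain ⟨h1, h2, h3, h4⟩ := he
  exact ⟨SC.snotR (SC.snotL (Δ := []) h3), SC.snotR (SC.snotL (Δ := []) h4),
    SC.snotRm (SC.snotLm (Δ := []) h1), SC.snotRm (SC.snotLm (Δ := []) h2)⟩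

theorem andLeft_congr {C D} (E) (he : StrictEquiv P (.fm C) (.fm D)) :
    StrictEquiv P (.fm (.and C E)) (.fm (.and D E)) := by
  obtain ⟨h1, h2, h3, h4⟩ := he
  refine ⟨?_, ?_, ?_, ?_⟩
  · exact SC.andR (SC.andL (Δ := []) (sc_mono h1 (by intro x hx; simp at hx ⊢; tauto)))
      (SC.andL (Δ := []) (sc_ax (by simp)))
  · exact SC.andR (SC.andL (Δ := []) (sc_mono h2 (by intro x hx; simp at hx ⊢; tauto)))
      (SC.andL (Δ := []) (sc_ax (by simp)))
  · exact SC.andLm (Δ := []) (SC.andRm₁ h3) (SC.andRm₂ (sc_ax (by simp)))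
  · exact SC.andLm (Δ := []) (SC.andRm₁ h4) (SC.andRm₂ (sc_ax (by simp)))

theorem andRight_congr {C D} (E) (he : StrictEquiv P (.fm C) (.fm D)) :
    StrictEquiv P (.fm (.and E C)) (.fm (.and E D)) := by
  obtain ⟨h1, h2, h3, h4⟩ := he
  refine ⟨?_, ?_, ?_, ?_⟩
  · exact SC.andR (SC.andL (Δ := []) (sc_ax (by simp)))
      (SC.andL (Δ := []) (sc_mono h1 (by intro x hx; simp at hx ⊢; tauto)))
  · exact SC.andR (SC.andL (Δ := []) (sc_ax (by simp)))
      (SC.andL (Δ := []) (sc_mono h2 (by intro x hx; simp at hx ⊢; tauto)))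
  · exact SC.andLm (Δ := []) (SC.andRm₁ (sc_ax (by simp))) (SC.andRm₂ h3)
  · exact SC.andLm (Δ := []) (SC.andRm₁ (sc_ax (by simp))) (SC.andRm₂ h4)

theorem orLeft_congr {C D} (E) (he : StrictEquiv P (.fm C) (.fm D)) :
    StrictEquiv P (.fm (.or C E)) (.fm (.or D E)) := by
  obtain ⟨h1, h2, h3, h4⟩ := he
  refine ⟨?_, ?_, ?_, ?_⟩
  · exact SC.orL (Δ := []) (SC.orR₁ h1) (SC.orR₂ (SC.rf _))
  · exact SC.orL (Δ := []) (SC.orR₁ h2) (SC.orR₂ (SC.rf _))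
  · exact SC.orLm (Δ := []) (SC.orRm (sc_mono h3 (by intro x hx; simp at hx ⊢; tauto))
      (sc_ax (by simp)))
  · exact SC.orLm (Δ := []) (SC.orRm (sc_mono h4 (by intro x hx; simp at hx ⊢; tauto))
      (sc_ax (by simp)))

theorem orRight_congr {C D} (E) (he : StrictEquiv P (.fm C) (.fm D)) :
    StrictEquiv P (.fm (.or E C)) (.fm (.or E D)) := by
  obtain ⟨h1, h2, h3, h4⟩ := he
  refine ⟨?_, ?_, ?_, ?_⟩
  · exact SC.orL (Δ := []) (SC.orR₁ (SC.rf _)) (SC.orR₂ h1)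
  · exact SC.orL (Δ := []) (SC.orR₁ (SC.rf _)) (SC.orR₂ h2)
  · exact SC.orLm (Δ := []) (SC.orRm (sc_ax (by simp))
      (sc_mono h3 (by intro x hx; simp at hx ⊢; tauto)))
  · exact SC.orLm (Δ := []) (SC.orRm (sc_ax (by simp))
      (sc_mono h4 (by intro x hx; simp at hx ⊢; tauto)))

theorem impL_aux {C D E} (hDC : SC P (.seq [.fm D] (.fm C))) :
    SC P (.seq [.fm (.imp C E)] (.fm (.imp D E))) := by
  have s1 : SC P (.seq ([RExpr.fm D] ++ [RExpr.seq [.fm C] (.fm E)]) (.fm E)) :=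
    SC.liP (fun X hX => by simp at hX; subst hX; exact hDC) (sc_ax (by simp))
  have s2 := SC.impL (Δ := [RExpr.fm D]) s1
  have s3 : SC P (.seq ([RExpr.fm (.imp C E)] ++ [RExpr.fm D]) (.fm E)) :=
    sc_mono s2 (by intro x hx; simp at hx ⊢; tauto)
  exact SC.impR (SC.riP s3)

theorem impLm_aux {C D E} (hDC : SC P (.seq [.fm D] (.fm C))) :
    SC P (.seq [.negFm (.imp C E)] (.negFm (.imp D E))) := by
  have s1 : SC P (.seq ([RExpr.fm D] ++ [rneg (RExpr.seq [.fm C] (.fm E))]) (.negFm E)) :=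
    SC.liN (fun X hX => by simp at hX; subst hX; exact hDC)
      (sc_ax (Δ := [RExpr.fm D] ++ [rneg (RExpr.fm E)]) (by simp [rneg]))
  have s2 := SC.impLm (Δ := [RExpr.fm D]) s1
  have s3 : SC P (.seq ([RExpr.negFm (.imp C E)] ++ [RExpr.fm D]) (.negFm E)) :=
    sc_mono s2 (by intro x hx; simp at hx ⊢; tauto)
  exact SC.impRm (SC.riN (Δ := [RExpr.negFm (.imp C E)]) (Γ := [RExpr.fm D]) (S := .fm E) s3)

theorem impR_aux {C D E} (hCD : SC P (.seq [.fm C] (.fm D))) :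
    SC P (.seq [.fm (.imp E C)] (.fm (.imp E D))) := by
  have s1 : SC P (.seq ([RExpr.fm E] ++ [RExpr.seq [.fm E] (.fm C)]) (.fm D)) :=
    SC.liP (fun X hX => by simp at hX; subst hX; exact SC.rf _)
      (sc_mono hCD (by intro x hx; simp at hx ⊢; tauto))
  have s2 := SC.impL (Δ := [RExpr.fm E]) s1
  have s3 : SC P (.seq ([RExpr.fm (.imp E C)] ++ [RExpr.fm E]) (.fm D)) :=
    sc_mono s2 (by intro x hx; simp at hx ⊢; tauto)
  exact SC.impR (SC.riP s3)

theorem impRm_aux {C D E} (hCD : SC P (.seq [.negFm C] (.negFm D))) :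
    SC P (.seq [.negFm (.imp E C)] (.negFm (.imp E D))) := by
  have s1 : SC P (.seq ([RExpr.fm E] ++ [rneg (RExpr.seq [.fm E] (.fm C))]) (.negFm D)) :=
    SC.liN (fun X hX => by simp at hX; subst hX; exact SC.rf _)
      (sc_mono hCD (by intro x hx; simp [rneg] at hx ⊢; tauto))
  have s2 := SC.impLm (Δ := [RExpr.fm E]) s1
  have s3 : SC P (.seq ([RExpr.negFm (.imp E C)] ++ [RExpr.fm E]) (.negFm D)) :=
    sc_mono s2 (by intro x hx; simp at hx ⊢; tauto)
  exact SC.impRm (SC.riN (Δ := [RExpr.negFm (.imp E C)]) (Γ := [RExpr.fm E]) (S := .fm D) s3)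

theorem replF_equiv {A B C D} (h : ReplF A B C D)
    (he : StrictEquiv P (.fm A) (.fm B)) : StrictEquiv P (.fm C) (.fm D) := by
  induction h with
  | here => exact he
  | snot _ ih => exact snot_congr ih
  | andLeft E _ ih => exact andLeft_congr E ih
  | andRight E _ ih => exact andRight_congr E ih
  | orLeft E _ ih => exact orLeft_congr E ih
  | orRight E _ ih => exact orRight_congr E ih
  | impLeft E _ ih => exact ⟨impL_aux ih.2.1, impL_aux ih.1, impLm_aux ih.2.1, impLm_aux ih.1⟩
  | impRight E _ ih => exact ⟨impR_aux ih.1, impR_aux ih.2.1, impRm_aux ih.2.2.1, impRm_aux ih.2.2.2⟩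

/-! ### The sequent cases -/

theorem succ_half {U V : RExpr} (ih : StrictEquiv P U V) (Δ : List RExpr) :
    SC P (.seq [.seq Δ U] (.seq Δ V)) ∧
      SC P (.seq [rneg (.seq Δ U)] (rneg (.seq Δ V))) := by
  constructor
  · have h1 : SC P (.seq (Δ ++ [RExpr.seq Δ U]) U) :=
      SC.liP (fun W hW => sc_ax hW) (sc_ax (by simp))
    have h2 : SC P (.seq ([RExpr.seq Δ U] ++ Δ) U) :=
      sc_mono h1 (by intro x hx; simp at hx ⊢; tauto)
    have h3 : SC P (.seq (([RExpr.seq Δ U] ++ Δ) ++ [U]) V) :=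
      sc_mono ih.1 (by intro x hx; simp at hx ⊢; tauto)
    exact SC.riP (SC.cut h2 h3)
  · have h1 : SC P (.seq (Δ ++ [rneg (RExpr.seq Δ U)]) (rneg V)) :=
      SC.liN (fun W hW => sc_ax hW)
        (sc_mono ih.2.2.1 (by intro x hx; simp at hx ⊢; tauto))
    have h2 : SC P (.seq ([rneg (RExpr.seq Δ U)] ++ Δ) (rneg V)) :=
      sc_mono h1 (by intro x hx; simp at hx ⊢; tauto)
    exact SC.riN h2

theorem mem_half {U V W : RExpr} (hVU : SC P (.seq [V] U)) (Δ Γ : List RExpr) :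
    SC P (.seq [.seq (Δ ++ U :: Γ) W] (.seq (Δ ++ V :: Γ) W)) ∧
      SC P (.seq [rneg (.seq (Δ ++ U :: Γ) W)] (rneg (.seq (Δ ++ V :: Γ) W))) := by
  have prems : ∀ X ∈ Δ ++ U :: Γ, SC P (.seq (Δ ++ V :: Γ) X) := by
    intro X hX
    simp at hX
    rcases hX with h | rfl | h
    · exact sc_ax (by simp [h])
    · exact sc_mono hVU (by intro x hx; simp at hx; subst hx; simp)
    · exact sc_ax (by simp [h])
  constructor
  · have h1 : SC P (.seq ((Δ ++ V :: Γ) ++ [RExpr.seq (Δ ++ U :: Γ) W]) W) :=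
      SC.liP prems (sc_ax (by simp))
    have h2 : SC P (.seq ([RExpr.seq (Δ ++ U :: Γ) W] ++ (Δ ++ V :: Γ)) W) :=
      sc_mono h1 (by intro x hx; simp at hx ⊢; tauto)
    exact SC.riP h2
  · have h1 : SC P (.seq ((Δ ++ V :: Γ) ++ [rneg (RExpr.seq (Δ ++ U :: Γ) W)]) (rneg W)) :=
      SC.liN prems (sc_ax (by simp))
    have h2 : SC P (.seq ([rneg (RExpr.seq (Δ ++ U :: Γ) W)] ++ (Δ ++ V :: Γ)) (rneg W)) :=
      sc_mono h1 (by intro x hx; simp at hx ⊢; tauto)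
    exact SC.riN h2
/-- Theorem 3 (generalized substitution theorem):
`A ⇔ˢ B ⊢ S_A ⇔ˢ S_B`. -/
theorem substitution_generalized (A B : Formula) (SA SB : RExpr) (h : ReplFR A B SA SB) :
    StrictEquiv (equivPrems (.fm A) (.fm B)) SA SB := by
  have he : StrictEquiv (equivPrems (.fm A) (.fm B)) (.fm A) (.fm B) :=
    ⟨SC.prem (by simp [equivPrems]), SC.prem (by simp [equivPrems]),
     SC.prem (by simp [equivPrems]), SC.prem (by simp [equivPrems])⟩
  induction h with
  | fm hf => exact replF_equiv hf he
  | neg _ ih =>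
      exact ⟨ih.2.2.1, ih.2.2.2, by rw [rnn, rnn]; exact ih.1, by rw [rnn, rnn]; exact ih.2.1⟩
  | seqSucc _ ih =>
      exact ⟨(succ_half ih _).1, (succ_half ih.symm _).1,
        (succ_half ih _).2, (succ_half ih.symm _).2⟩
  | seqMem Δ Γ _ ih =>
      exact ⟨(mem_half ih.2.1 Δ Γ).1, (mem_half ih.1 Δ Γ).1,
        (mem_half ih.2.1 Δ Γ).2, (mem_half ih.1 Δ Γ).2⟩
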